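/- arXiv:1809.03961 — 2 statements merged into one kernel-verified Lean document; each statement's English description precedes it below -/
import Mathlib

section
/- The dimensionless product satisfies r_S ε₂ < λ₁, where r_S = s₁⁰/s₂_max, ε₂ = t_{c₁}/t_{s₁}, λ₁ = t_{c₁}/t_{s₂}; explicitly, (s₁⁰/s₂_max)·(V₁/(k₁(K_{M₁}+s₁⁰)²)) < k₃e₂⁰/(k₁(K_{M₁}+s₁⁰)) under the stated definitions, assuming V₂ > k₂c₁_max. -/
/-- The dimensionless product satisfies r_S ε₂ < λ₁ under the stated
definitions, assuming V₂ > k₂ c₁_max. -/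
theorem stmt_11 (k1 k2 km1 k3 km3 k4 e10 e20 s10 : ℝ)
    (hk1 : 0 < k1) (hk2 : 0 < k2) (hkm1 : 0 < km1) (hk3 : 0 < k3)
    (hkm3 : 0 < km3) (hk4 : 0 < k4) (he10 : 0 < e10) (he20 : 0 < e20)
    (hs10 : 0 < s10)
    (KM1 KM2 V1 V2 c1max s2max tc1 ts1 ts2 rS ε2 lam1 : ℝ)
    (hKM1 : KM1 = (km1 + k2) / k1)
    (hKM2 : KM2 = (km3 + k4) / k3)
    (hV1 : V1 = k2 * e10)
    (hV2 : V2 = k4 * e20)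
    (hc1max : c1max = e10 * s10 / (KM1 + s10))
    (hV2big : k2 * c1max < V2)
    (hs2max : s2max = KM2 * (k2 * c1max) / (V2 - k2 * c1max))
    (htc1 : tc1 = 1 / (k1 * (KM1 + s10)))
    (hts1 : ts1 = (KM1 + s10) / V1)
    (hts2 : ts2 = 1 / (k3 * e20))
    (hrS : rS = s10 / s2max)
    (hε2 : ε2 = tc1 / ts1)
    (hlam1 : lam1 = tc1 / ts2) :
    rS * ε2 < lam1 ∧
      (s10 / s2max) * (V1 / (k1 * (KM1 + s10) ^ 2)) <
        k3 * e20 / (k1 * (KM1 + s10)) := by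
  have hK : 0 < KM1 + s10 := by rw [hKM1]; positivity
  have hc : 0 < c1max := by rw [hc1max]; positivity
  have hd : 0 < V2 - k2 * c1max := by linarith
  have hKM2pos : 0 < KM2 := by rw [hKM2]; positivity
  have hs2 : 0 < s2max := by rw [hs2max]; positivity
  have hV1pos : 0 < V1 := by rw [hV1]; positivity
  have hcK : c1max * (KM1 + s10) = e10 * s10 := by
    rw [hc1max]; field_simp
  have hlt : V2 - k2 * c1max < (km3 + k4) * e20 := by
    rw [hV2]; nlinarith
  have key : (s10 / s2max) * (V1 / (k1 * (KM1 + s10) ^ 2)) <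
      k3 * e20 / (k1 * (KM1 + s10)) := by
    rw [hs2max, hKM2, hV1]
    rw [div_mul_div_comm, div_lt_div_iff₀ (by positivity) (by positivity),
      show k3 * e20 * ((km3 + k4) / k3 * (k2 * c1max) / (V2 - k2 * c1max) * (k1 * (KM1 + s10) ^ 2))
        = k3 * e20 * ((km3 + k4) * (k2 * c1max) * (k1 * (KM1 + s10) ^ 2)) / (k3 * (V2 - k2 * c1max)) by
          field_simp,
      lt_div_iff₀ (by positivity)]
    have h1 : s10 * (k2 * e10) * (k1 * (KM1 + s10)) * (k3 * (V2 - k2 * c1max))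
        = (k3 * (k2 * c1max) * (k1 * (KM1 + s10) ^ 2)) * (V2 - k2 * c1max) := by
      rw [show s10 * (k2 * e10) * (k1 * (KM1 + s10)) = k2 * k1 * (KM1 + s10) * (e10 * s10) by ring,
        ← hcK]; ring
    rw [h1]
    calc (k3 * (k2 * c1max) * (k1 * (KM1 + s10) ^ 2)) * (V2 - k2 * c1max)
        < (k3 * (k2 * c1max) * (k1 * (KM1 + s10) ^ 2)) * ((km3 + k4) * e20) :=
          mul_lt_mul_of_pos_left hlt (by positivity)
      _ = k3 * e20 * ((km3 + k4) * (k2 * c1max) * (k1 * (KM1 + s10) ^ 2)) := by ring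
  refine ⟨?_, key⟩
  have hE : tc1 / ts1 = V1 / (k1 * (KM1 + s10) ^ 2) := by
    rw [htc1, hts1]; field_simp [hV1pos.ne']
  have h2 : lam1 = k3 * e20 / (k1 * (KM1 + s10)) := by
    rw [hlam1, htc1, hts2]; field_simp
  rw [hrS, hε2, hE, h2]; exact key
end

section
/- The function x(t) = s₂_max (1 + ψ W(-ψ⁻¹ exp(-ψ⁻¹ - Θ t))), with ψ = V₂/(k₂c₁_max) > 1, Θ = (V₂ - k₂c₁_max)²/(V₂ K_{M₂}), and W the principal Lambert-W branch, solves the ODE x' = -V₂ x/(K_{M₂}+x) + k₂c₁_max with x(0) = 0. -/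
open Real Set Filter

noncomputable def ftW (w : ℝ) : ℝ := if w ≤ -1 then w * Real.exp (-1) else w * Real.exp w

lemma ftW_eq {w : ℝ} (h : -1 ≤ w) : ftW w = w * Real.exp w := by
  unfold ftW
  split_ifs with h'
  · have hw : w = -1 := le_antisymm h' h
    rw [hw]
  · rfl

lemma ftW_strictMono : StrictMono ftW := by
  have h2' : StrictMonoOn (fun w : ℝ => w * Real.exp w) (Ici (-1 : ℝ)) := by
    apply strictMonoOn_of_deriv_pos (convex_Ici _)
    · fun_prop
    · intro z hz
      rw [interior_Ici] at hz
      have hd : HasDerivAt (fun w : ℝ => w * Real.exp w) (1 * Real.exp z + z * Real.exp z) z :=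
        (hasDerivAt_id z).mul (Real.hasDerivAt_exp z)
      rw [hd.deriv]
      have := Real.exp_pos z
      have : -1 < z := hz
      nlinarith [Real.exp_pos z]
  have h1 : StrictMonoOn ftW (Iic (-1)) := by
    intro a ha b hb hab
    simp only [ftW, if_pos (mem_Iic.mp ha), if_pos (mem_Iic.mp hb)]
    exact mul_lt_mul_of_pos_right hab (Real.exp_pos _)
  have h2 : StrictMonoOn ftW (Ici (-1)) := by
    intro a ha b hb hab
    rw [ftW_eq (mem_Ici.mp ha), ftW_eq (mem_Ici.mp hb)]
    exact h2' ha hb hab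
  exact h1.Iic_union_Ici h2

lemma ftW_continuous : Continuous ftW := by
  apply Continuous.if_le (by fun_prop) (by fun_prop) continuous_id continuous_const
  intro w hw
  simp only [id] at hw; rw [hw]

lemma le_ftW (w : ℝ) : w ≤ ftW w := by
  unfold ftW
  split_ifs with h
  · nlinarith [Real.exp_lt_one_iff.mpr (show (-1:ℝ) < 0 by norm_num), Real.exp_pos (-1:ℝ)]
  · rcases le_or_gt 0 w with h0 | h0
    · nlinarith [Real.one_le_exp h0]
    · nlinarith [Real.exp_pos w, Real.exp_le_one_iff.mpr h0.le]

lemma ftW_surj : Function.Surjective ftW := by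
  apply ftW_continuous.surjective
  · exact tendsto_atTop_mono le_ftW tendsto_id
  · have h : (fun w : ℝ => w * Real.exp (-1)) =ᶠ[atBot] ftW := by
      filter_upwards [eventually_le_atBot (-1 : ℝ)] with w hw
      simp [ftW, hw]
    exact Tendsto.congr' h (tendsto_id.atBot_mul_const (Real.exp_pos (-1)))
/-- The function x(t) = s₂_max(1 + ψ W(-ψ⁻¹ exp(-ψ⁻¹ - Θt))) with
ψ = V₂/(k₂c₁_max) > 1, Θ = (V₂-k₂c₁_max)²/(V₂K_{M₂}) and W the principal
Lambert-W branch solves x' = -V₂x/(K_{M₂}+x) + k₂c₁_max, x(0) = 0. -/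
theorem stmt_14 (V2 KM2 k2 c1max : ℝ)
    (hV2 : 0 < V2) (hKM2 : 0 < KM2) (hk2 : 0 < k2) (hc1max : 0 < c1max)
    (hlt : k2 * c1max < V2)
    (s2max ψ Θ : ℝ)
    (hs2max : s2max = KM2 * (k2 * c1max) / (V2 - k2 * c1max))
    (hψ : ψ = V2 / (k2 * c1max))
    (hΘ : Θ = (V2 - k2 * c1max) ^ 2 / (V2 * KM2))
    (W : ℝ → ℝ)
    (hW : ∀ u : ℝ, -Real.exp (-1) < u → u ≤ 0 →
      -1 ≤ W u ∧ W u * Real.exp (W u) = u)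
    (x : ℝ → ℝ)
    (hx : ∀ t, x t = s2max * (1 + ψ * W (-ψ⁻¹ * Real.exp (-ψ⁻¹ - Θ * t)))) :
    x 0 = 0 ∧
      ∀ t : ℝ, 0 ≤ t →
        HasDerivAt x (-V2 * x t / (KM2 + x t) + k2 * c1max) t := by
  have hκ : 0 < k2 * c1max := mul_pos hk2 hc1max
  have hψ1 : 1 < ψ := by rw [hψ]; rw [lt_div_iff₀ hκ]; linarith
  have hψ0 : 0 < ψ := by linarith
  have ha0 : 0 < ψ⁻¹ := inv_pos.mpr hψ0
  have ha1 : ψ⁻¹ < 1 := by rw [inv_lt_one_iff₀]; right; exact hψ1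
  have hΘ0 : 0 < Θ := by
    rw [hΘ]
    have h : 0 < V2 - k2 * c1max := by linarith
    positivity
  set a := ψ⁻¹ with hadef
  -- order iso from ftW
  set e : ℝ ≃o ℝ := StrictMono.orderIsoOfSurjective ftW ftW_strictMono ftW_surj with he
  set g : ℝ → ℝ := fun u => e.symm u with hg
  have hge : ∀ u, ftW (g u) = u := by
    intro u
    have := e.apply_symm_apply u
    rwa [show (e (e.symm u)) = ftW (e.symm u) from congrFun (StrictMono.coe_orderIsoOfSurjective ftW ftW_strictMono ftW_surj) _] at this
  have hgcont : Continuous g := e.symm.toHomeomorph.continuous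
  -- ftW at -1 and 0
  have hftm1 : ftW (-1) = -Real.exp (-1) := by unfold ftW; rw [if_pos le_rfl]; ring
  have hft0 : ftW 0 = 0 := by unfold ftW; rw [if_neg (by norm_num)]; ring
  -- g u in (-1, 0) for u in range, and W u = g u
  have hgmem : ∀ u : ℝ, -Real.exp (-1) < u → u < 0 → -1 < g u ∧ g u < 0 := by
    intro u h1 h2
    constructor
    · have : ftW (-1) < ftW (g u) := by rw [hftm1, hge]; exact h1
      exact ftW_strictMono.lt_iff_lt.mp this
    · have : ftW (g u) < ftW 0 := by rw [hft0, hge]; exact h2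
      exact ftW_strictMono.lt_iff_lt.mp this
  have hWg : ∀ u : ℝ, -Real.exp (-1) < u → u ≤ 0 → W u = g u := by
    intro u h1 h2
    obtain ⟨hw1, hw2⟩ := hW u h1 h2
    have : ftW (W u) = ftW (g u) := by rw [hge, ftW_eq hw1, hw2]
    exact ftW_strictMono.injective this
  -- membership of argument for s > t₀
  set t₀ : ℝ := (Real.log a - a + 1) / Θ with ht₀
  have ht₀neg : t₀ < 0 := by
    rw [ht₀, div_neg_iff]
    right
    constructor
    · have := Real.log_lt_sub_one_of_pos ha0 (ne_of_lt ha1)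
      linarith
    · exact hΘ0
  have hmem : ∀ s : ℝ, t₀ < s → -Real.exp (-1) < -a * Real.exp (-a - Θ * s) ∧
      -a * Real.exp (-a - Θ * s) < 0 := by
    intro s hs
    constructor
    · have hlog : Real.log a - a - Θ * s < -1 := by
        rw [ht₀, div_lt_iff₀ hΘ0] at hs
        linarith
      have : a * Real.exp (-a - Θ * s) < Real.exp (-1) := by
        calc a * Real.exp (-a - Θ * s) = Real.exp (Real.log a - a - Θ * s) := by
              rw [show Real.log a - a - Θ * s = Real.log a + (-a - Θ * s) by ring,
                Real.exp_add, Real.exp_log ha0]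
          _ < Real.exp (-1) := Real.exp_lt_exp.mpr hlog
      linarith
    · have := Real.exp_pos (-a - Θ * s)
      nlinarith
  -- x = y on Ioi t₀ where y uses g
  set y : ℝ → ℝ := fun s => s2max * (1 + ψ * g (-a * Real.exp (-a - Θ * s))) with hy
  have hxy : ∀ s : ℝ, t₀ < s → x s = y s := by
    intro s hs
    obtain ⟨h1, h2⟩ := hmem s hs
    rw [hx, hy]
    rw [hWg _ h1 h2.le]
  -- x 0 = 0
  have hx0 : x 0 = 0 := by
    have h0 : t₀ < 0 := ht₀neg
    obtain ⟨h1, h2⟩ := hmem 0 h0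
    have hga : g (-a * Real.exp (-a - Θ * 0)) = -a := by
      apply ftW_strictMono.injective
      rw [hge, ftW_eq (by linarith : (-1:ℝ) ≤ -a)]
      norm_num
    rw [hxy 0 h0, hy]
    simp only [hga]
    rw [hadef, mul_neg, mul_inv_cancel₀ (ne_of_gt hψ0)]
    ring
  refine ⟨hx0, ?_⟩
  intro t ht
  have htt₀ : t₀ < t := lt_of_lt_of_le ht₀neg ht
  obtain ⟨h1, h2⟩ := hmem t htt₀
  set u := fun s : ℝ => -a * Real.exp (-a - Θ * s) with hu
  set w : ℝ := g (u t) with hwdef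
  obtain ⟨hw1, hw2⟩ := hgmem (u t) h1 h2
  have hwe : w * Real.exp w = u t := by rw [hwdef, ← ftW_eq hw1.le, hge]
  -- derivative of g at u t
  have hfd : HasDerivAt ftW ((1 + w) * Real.exp w) w := by
    have hd : HasDerivAt (fun v : ℝ => v * Real.exp v) (1 * Real.exp w + w * Real.exp w) w :=
      (hasDerivAt_id w).mul (Real.hasDerivAt_exp w)
    have heq : ftW =ᶠ[nhds w] fun v : ℝ => v * Real.exp v := by
      filter_upwards [Ioi_mem_nhds hw1] with v hv
      exact ftW_eq (le_of_lt hv)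
    have := hd.congr_of_eventuallyEq heq
    rw [show (1 + w) * Real.exp w = 1 * Real.exp w + w * Real.exp w by ring]
    exact this
  have hfne : (1 + w) * Real.exp w ≠ 0 :=
    ne_of_gt (by nlinarith [Real.exp_pos w])
  have hgd : HasDerivAt g (((1 + w) * Real.exp w)⁻¹) (u t) := by
    apply HasDerivAt.of_local_left_inverse hgcont.continuousAt
      hfd hfne
    exact Filter.Eventually.of_forall hge
  -- derivative of u
  have hud : HasDerivAt u (-a * (Real.exp (-a - Θ * t) * -Θ)) t := by
    have hinner : HasDerivAt (fun s : ℝ => -a - Θ * s) (-Θ) t := by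
      simpa using ((hasDerivAt_id t).const_mul Θ).const_sub (-a)
    exact (hinner.exp).const_mul (-a)
  -- derivative of y and hence x
  have hyd : HasDerivAt y (s2max * (ψ * (((1 + w) * Real.exp w)⁻¹ * (-a * (Real.exp (-a - Θ * t) * -Θ))))) t := by
    have := (hgd.comp t hud).const_mul ψ
    have := this.const_add 1
    have := this.const_mul s2max
    exact this
  have hxd : HasDerivAt x (s2max * (ψ * (((1 + w) * Real.exp w)⁻¹ * (-a * (Real.exp (-a - Θ * t) * -Θ))))) t := by
    apply hyd.congr_of_eventuallyEq
    filter_upwards [Ioi_mem_nhds htt₀] with s hs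
    exact hxy s hs
  -- identify values
  have hE : Real.exp (-a - Θ * t) = -ψ * (w * Real.exp w) := by
    rw [hwe]
    show Real.exp (-a - Θ * t) = -ψ * (-a * Real.exp (-a - Θ * t))
    rw [hadef]
    field_simp
  have hxt : x t = s2max * (1 + ψ * w) := by
    rw [hxy t htt₀, hy]
  have hsub : (0:ℝ) < V2 - k2 * c1max := by linarith
  have h1w : (0:ℝ) < 1 + w := by
    have : -1 < w := hw1
    linarith
  have hden : KM2 + x t = KM2 * V2 / (V2 - k2 * c1max) * (1 + w) := by
    rw [hxt, hs2max, hψ]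
    field_simp [hsub.ne', hκ.ne']
    ring
  have hdenne : KM2 + x t ≠ 0 := by
    rw [hden]
    exact ne_of_gt (mul_pos (div_pos (mul_pos hKM2 hV2) hsub) h1w)
  have hval : s2max * (ψ * (((1 + w) * Real.exp w)⁻¹ * (-a * (Real.exp (-a - Θ * t) * -Θ)))) =
      -V2 * x t / (KM2 + x t) + k2 * c1max := by
    rw [hE, hden, hxt]
    rw [hadef, hs2max, hψ, hΘ]
    have hew := Real.exp_pos w
    field_simp [hsub.ne', hκ.ne', h1w.ne', hew.ne', hV2.ne', hKM2.ne']
    ring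
  rw [← hval]
  exact hxd
end
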